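/- Under the assumptions of the generating lemma (framing (gₙ, hₙ) for F, closed densely defined A, B with (gₙ) ⊆ dom A, (hₙ) ⊆ dom B, dense D_B ⊆ dom B*, F ⊆ {g ∈ dom A* : A*g ∈ F_max}, and ⟨A*f, B*h⟩ = ⟨f, h⟩ for f ∈ F, h ∈ D_B), if additionally the partial sums ∑_{n≤N} ⟨f, A gₙ⟩ B hₙ are norm-bounded for each f ∈ F, then the series ∑ₙ ⟨A*f, gₙ⟩ B hₙ converges weakly to f for every f ∈ F. -/

import Mathlib

open scoped ComplexInnerProductSpace

/-- If, in addition to the hypotheses of the generating lemma, the partial sums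
`∑_{n≤N} ⟨f, A gₙ⟩ B hₙ` are norm-bounded, then the series `∑ₙ ⟨A*f, gₙ⟩ B hₙ`
converges weakly to `f` for every `f ∈ F`. -/
theorem framing_weak_convergence {H : Type*} [NormedAddCommGroup H] [InnerProductSpace ℂ H]
    [CompleteSpace H] (g h : ℕ → H) (F : Set H) (A B : H →ₗ.[ℂ] H)
    (hAdense : Dense (A.domain : Set H)) (hBdense : Dense (B.domain : Set H))
    (hAclosed : A.IsClosed) (hBclosed : B.IsClosed)
    (hg : ∀ n, g n ∈ A.domain) (hh : ∀ n, h n ∈ B.domain)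
    (DB : Set H) (hDBsub : DB ⊆ B.adjoint.domain) (hDBdense : Dense DB)
    (hF : F ≠ {0})
    (hframe : ∀ f ∈ F, HasSum (fun n => ⟪g n, f⟫ • h n) f)
    (hFdom : ∀ f ∈ F, f ∈ A.adjoint.domain)
    (hFmax : ∀ f (hf : f ∈ F),
      HasSum (fun n => ⟪g n, A.adjoint ⟨f, hFdom f hf⟩⟫ • h n) (A.adjoint ⟨f, hFdom f hf⟩))
    (hAB : ∀ f (hf : f ∈ F), ∀ x (hx : x ∈ DB),
      ⟪B.adjoint ⟨x, hDBsub hx⟩, A.adjoint ⟨f, hFdom f hf⟩⟫ = ⟪x, f⟫)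
    (hbound : ∀ f (hf : f ∈ F), ∃ C : ℝ, ∀ N : ℕ,
      ‖∑ n ∈ Finset.range (N + 1), ⟪A ⟨g n, hg n⟩, f⟫ • B ⟨h n, hh n⟩‖ ≤ C) :
    ∀ f (hf : f ∈ F), ∀ y : H,
      Filter.Tendsto
        (fun N : ℕ =>
          ⟪y, ∑ n ∈ Finset.range (N + 1),
              ⟪g n, A.adjoint ⟨f, hFdom f hf⟩⟫ • B ⟨h n, hh n⟩⟫)
        Filter.atTop (nhds ⟪y, f⟫) := by
  intro f hf y
  have hformalA : A.adjoint.IsFormalAdjoint A := LinearPMap.adjoint_isFormalAdjoint hAdense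
  have hformalB : B.adjoint.IsFormalAdjoint B := LinearPMap.adjoint_isFormalAdjoint hBdense
  set Af : H := A.adjoint ⟨f, hFdom f hf⟩ with hAfdef
  set φ : ℕ → ℂ := fun n => ⟪g n, Af⟫ with hφdef
  set S : ℕ → H := fun N => ∑ n ∈ Finset.range (N + 1), φ n • B ⟨h n, hh n⟩ with hSdef
  show Filter.Tendsto (fun N => ⟪y, S N⟫) Filter.atTop (nhds ⟪y, f⟫)
  -- rewrite the coefficient
  have heq : ∀ n, (⟪A ⟨g n, hg n⟩, f⟫ : ℂ) = φ n := by
    intro n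
    have h1 := hformalA ⟨f, hFdom f hf⟩ ⟨g n, hg n⟩
    calc (⟪A ⟨g n, hg n⟩, f⟫ : ℂ) = starRingEnd ℂ ⟪f, A ⟨g n, hg n⟩⟫ :=
          (inner_conj_symm _ _).symm
      _ = starRingEnd ℂ ⟪Af, g n⟫ := by rw [← h1]
      _ = ⟪g n, Af⟫ := inner_conj_symm _ _
  -- uniform bound on partial sums
  obtain ⟨C, hC⟩ := hbound f hf
  have hCb : ∀ N, ‖S N‖ ≤ C := by
    intro N
    have : S N = ∑ n ∈ Finset.range (N + 1), ⟪A ⟨g n, hg n⟩, f⟫ • B ⟨h n, hh n⟩ :=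
      Finset.sum_congr rfl fun n _ => by rw [heq]
    rw [this]; exact hC N
  -- convergence on the dense set DB
  have hDBconv : ∀ x ∈ DB,
      Filter.Tendsto (fun N => ⟪x, S N⟫) Filter.atTop (nhds ⟪x, f⟫) := by
    intro x hx
    set Bx : H := B.adjoint ⟨x, hDBsub hx⟩ with hBxdef
    have key : ∀ N, ⟪x, S N⟫ = ⟪Bx, ∑ n ∈ Finset.range (N + 1), φ n • h n⟫ := by
      intro N
      rw [hSdef]
      simp only [inner_sum, inner_smul_right]
      refine Finset.sum_congr rfl fun n _ => ?_
      congr 1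
      exact (hformalB ⟨x, hDBsub hx⟩ ⟨h n, hh n⟩).symm
    have hsum : Filter.Tendsto (fun N => ∑ n ∈ Finset.range (N + 1), φ n • h n)
        Filter.atTop (nhds Af) :=
      ((hFmax f hf).tendsto_sum_nat).comp (Filter.tendsto_add_atTop_nat 1)
    have hinner :
        Filter.Tendsto (fun N => ⟪Bx, ∑ n ∈ Finset.range (N + 1), φ n • h n⟫)
          Filter.atTop (nhds ⟪Bx, Af⟫) :=
      (tendsto_const_nhds : Filter.Tendsto (fun _ : ℕ => Bx) _ _).inner hsum
    have hBA : (⟪Bx, Af⟫ : ℂ) = ⟪x, f⟫ := hAB f hf x hx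
    rw [hBA] at hinner
    simpa only [key] using hinner
  -- density / boundedness argument
  rw [Metric.tendsto_atTop]
  intro ε hε
  obtain ⟨M, hM, hCM, hfM⟩ : ∃ M : ℝ, 0 < M ∧ C ≤ M ∧ ‖f‖ ≤ M :=
    ⟨max C 0 + ‖f‖ + 1, by positivity,
      by have := le_max_left C 0; have := norm_nonneg f; linarith,
      by have := le_max_right C 0; linarith⟩
  obtain ⟨x, hxDB, hxy⟩ := hDBdense.exists_dist_lt y (show (0:ℝ) < ε / (3 * M) by positivity)
  have h1 := hDBconv x hxDB
  rw [Metric.tendsto_atTop] at h1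
  obtain ⟨N₀, hN₀⟩ := h1 (ε / 3) (by positivity)
  refine ⟨N₀, fun N hN => ?_⟩
  have hd := hN₀ N hN
  rw [dist_eq_norm] at hd ⊢
  have hyx : ‖y - x‖ < ε / (3 * M) := by rw [← dist_eq_norm]; exact hxy
  have hSM : ‖S N‖ ≤ M := le_trans (hCb N) hCM
  calc ‖⟪y, S N⟫ - ⟪y, f⟫‖
      = ‖⟪y - x, S N⟫ + (⟪x, S N⟫ - ⟪x, f⟫) - ⟪y - x, f⟫‖ := by
        rw [inner_sub_left, inner_sub_left]; congr 1; ring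
    _ ≤ ‖⟪y - x, S N⟫ + (⟪x, S N⟫ - ⟪x, f⟫)‖ + ‖⟪y - x, f⟫‖ := norm_sub_le _ _
    _ ≤ ‖⟪y - x, S N⟫‖ + ‖⟪x, S N⟫ - ⟪x, f⟫‖ + ‖⟪y - x, f⟫‖ := by
        gcongr; exact norm_add_le _ _
    _ ≤ ‖y - x‖ * ‖S N‖ + ‖⟪x, S N⟫ - ⟪x, f⟫‖ + ‖y - x‖ * ‖f‖ := by
        gcongr <;> exact norm_inner_le_norm _ _
    _ < ε := by
        have hb1 : ‖y - x‖ * ‖S N‖ ≤ ‖y - x‖ * M :=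
          mul_le_mul_of_nonneg_left hSM (norm_nonneg _)
        have hb2 : ‖y - x‖ * ‖f‖ ≤ ‖y - x‖ * M :=
          mul_le_mul_of_nonneg_left hfM (norm_nonneg _)
        have hb3 : ‖y - x‖ * M < (ε / (3 * M)) * M :=
          mul_lt_mul_of_pos_right hyx hM
        have h33 : (ε / (3 * M)) * M = ε / 3 := by field_simp
        linarith [hb1, hb2, hb3, hd, h33]
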